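/- Let m ≥ 2 and let r, s_1, …, s_m be integers with gcd(r, s_1, …, s_m) = 1. Then there exist integers h_1, …, h_m such that gcd(r·h_1 + s_1, …, r·h_m + s_m) = 1. -/

import Mathlib

lemma key (a b c : ℤ) (hc : c ≠ 0)
    (H : ∀ p : ℕ, p.Prime → (p:ℤ) ∣ a → (p:ℤ) ∣ b → (p:ℤ) ∣ c → False) :
    ∃ k : ℤ, IsCoprime (a * k + b) c := by
  set K : ℕ := ∏ p ∈ c.natAbs.primeFactors.filter (fun p => ¬ p ∣ b.natAbs), p with hK
  refine ⟨(K:ℤ), ?_⟩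
  rw [Int.isCoprime_iff_gcd_eq_one]
  by_contra hg
  have hg0 : Int.gcd (a * K + b) c ≠ 0 := fun h0 => hc (Int.gcd_eq_zero_iff.mp h0).2
  set p := (Int.gcd (a * K + b) c).minFac with hp
  have hpp : p.Prime := Nat.minFac_prime hg
  have hpd1 : (p:ℤ) ∣ a * K + b :=
    dvd_trans (Int.natCast_dvd_natCast.mpr (Nat.minFac_dvd _)) (Int.gcd_dvd_left _ _)
  have hpd2 : (p:ℤ) ∣ c :=
    dvd_trans (Int.natCast_dvd_natCast.mpr (Nat.minFac_dvd _)) (Int.gcd_dvd_right _ _)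
  by_cases hb : (p:ℤ) ∣ b
  · have hak : (p:ℤ) ∣ a * K := by
      have := dvd_sub hpd1 hb; simpa using this
    rcases (Nat.prime_iff_prime_int.mp hpp).dvd_mul.mp hak with h1 | h1
    · exact H p hpp h1 hb hpd2
    · have hpK : p ∣ K := Int.natCast_dvd_natCast.mp h1
      obtain ⟨q, hq, hpq⟩ := (Nat.Prime.prime hpp).exists_mem_finset_dvd hpK
      simp only [Finset.mem_filter, Nat.mem_primeFactors] at hq
      have : p = q := (Nat.prime_dvd_prime_iff_eq hpp hq.1.1).mp hpq
      subst this
      exact hq.2 (Int.natCast_dvd.mp hb)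
  · have hpmem : p ∈ c.natAbs.primeFactors.filter (fun p => ¬ p ∣ b.natAbs) := by
      simp only [Finset.mem_filter, Nat.mem_primeFactors]
      exact ⟨⟨hpp, Int.natCast_dvd.mp hpd2, by simpa using hc⟩,
        fun hd => hb (Int.natCast_dvd.mpr hd)⟩
    have hpK : p ∣ K := Finset.dvd_prod_of_mem _ hpmem
    have h1 : (p:ℤ) ∣ a * K := Dvd.dvd.mul_left (Int.natCast_dvd_natCast.mpr hpK) a
    exact hb (by have := dvd_sub hpd1 h1; simpa using this)

lemma gcd_eq_one_of_dvd_one {α : Type*} [Fintype α] (f : α → ℤ)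
    (h : Finset.univ.gcd f ∣ 1) : Finset.univ.gcd f = 1 := by
  have := Finset.normalize_gcd (s := (Finset.univ : Finset α)) (f := f)
  rw [← this]
  exact normalize_eq_one.mpr (isUnit_of_dvd_one h)

theorem stmt_12 (m : ℕ) (hm : 2 ≤ m) (r : ℤ) (s : Fin m → ℤ)
    (h : gcd r (Finset.univ.gcd s) = 1) :
    ∃ hs : Fin m → ℤ, Finset.univ.gcd (fun i => r * hs i + s i) = 1 := by
  set i0 : Fin m := ⟨0, by omega⟩ with hi0
  set i1 : Fin m := ⟨1, by omega⟩ with hi1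
  have hne : i1 ≠ i0 := by simp [hi0, hi1, Fin.ext_iff]
  set d : ℤ := (Finset.univ.erase i0).gcd s with hd
  by_cases hd0 : d = 0
  · -- all s i = 0 for i ≠ i0
    have hz : ∀ i : Fin m, i ≠ i0 → s i = 0 := by
      intro i hi
      have := Finset.gcd_eq_zero_iff.mp hd0.symm.symm
      exact this i (Finset.mem_erase.mpr ⟨hi, Finset.mem_univ i⟩)
    refine ⟨fun i => if i = i1 then 1 else 0, ?_⟩
    apply gcd_eq_one_of_dvd_one
    set g := Finset.univ.gcd (fun i => r * (if i = i1 then (1:ℤ) else 0) + s i) with hg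
    have hgs0 : g ∣ s i0 := by
      have h0 : g ∣ r * (if i0 = i1 then (1:ℤ) else 0) + s i0 :=
        Finset.gcd_dvd (Finset.mem_univ i0)
      rwa [if_neg (Ne.symm hne), mul_zero, zero_add] at h0
    have hgr : g ∣ r := by
      have h0 : g ∣ r * (if i1 = i1 then (1:ℤ) else 0) + s i1 :=
        Finset.gcd_dvd (Finset.mem_univ i1)
      rwa [if_pos rfl, mul_one, hz i1 hne, add_zero] at h0
    have hgall : g ∣ Finset.univ.gcd s := by
      apply Finset.dvd_gcd
      intro i _
      by_cases hi : i = i0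
      · rw [hi]; exact hgs0
      · rw [hz i hi]; exact dvd_zero g
    calc g ∣ gcd r (Finset.univ.gcd s) := dvd_gcd hgr hgall
      _ = 1 := h
  · have Hp : ∀ p : ℕ, p.Prime → (p:ℤ) ∣ r → (p:ℤ) ∣ s i0 → (p:ℤ) ∣ d → False := by
      intro p pp h1 h2 h3
      have hps : (p:ℤ) ∣ Finset.univ.gcd s := by
        apply Finset.dvd_gcd
        intro i _
        by_cases hi : i = i0
        · rw [hi]; exact h2
        · exact h3.trans (Finset.gcd_dvd (Finset.mem_erase.mpr ⟨hi, Finset.mem_univ i⟩))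
      have : (p:ℤ) ∣ 1 := h ▸ dvd_gcd h1 hps
      exact (Nat.prime_iff_prime_int.mp pp).not_unit (isUnit_of_dvd_one this)
    obtain ⟨k, hk⟩ := key r (s i0) d hd0 Hp
    refine ⟨fun i => if i = i0 then k else 0, ?_⟩
    apply gcd_eq_one_of_dvd_one
    set g := Finset.univ.gcd (fun i => r * (if i = i0 then k else 0) + s i) with hg
    have hg1 : g ∣ r * k + s i0 := by
      have h0 : g ∣ r * (if i0 = i0 then k else 0) + s i0 :=
        Finset.gcd_dvd (Finset.mem_univ i0)
      rwa [if_pos rfl] at h0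
    have hg2 : g ∣ d := by
      apply Finset.dvd_gcd
      intro i hi
      have hi' : i ≠ i0 := (Finset.mem_erase.mp hi).1
      have h0 : g ∣ r * (if i = i0 then k else 0) + s i :=
        Finset.gcd_dvd (Finset.mem_univ i)
      rwa [if_neg hi', mul_zero, zero_add] at h0
    obtain ⟨u, v, huv⟩ := hk
    calc g ∣ u * (r * k + s i0) + v * d := dvd_add (hg1.mul_left u) (hg2.mul_left v)
      _ = 1 := huv
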